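/- Let M be a unital quantum channel and ω ∈ ℂ with |ω| = 1. Then A is an eigenvector of M with eigenvalue ω if and only if A is an eigenvector of the adjoint M† with eigenvalue ω̄. Moreover, M(A) = ω A if and only if Mᵢ A = ω A Mᵢ for every Kraus operator Mᵢ of M, and the eigenspace of M for ω is spanned by partial isometries. -/

import Mathlib

open Matrix
open scoped ComplexOrder

noncomputable section

abbrev Mat (d : ℕ) := Matrix (Fin d) (Fin d) ℂ

/-- `K` is a Kraus representation of the linear map `Φ`. -/
def IsKrausRep {d : ℕ} (Φ : Mat d →ₗ[ℂ] Mat d) {n : ℕ} (K : Fin n → Mat d) : Prop :=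
  (∀ A, Φ A = ∑ i, K i * A * (K i)ᴴ) ∧ ∑ i, (K i)ᴴ * K i = 1

/-- A quantum channel: completely positive trace-preserving map, i.e. admitting a Kraus
representation with the normalization condition. -/
def IsCPTP {d : ℕ} (Φ : Mat d →ₗ[ℂ] Mat d) : Prop :=
  ∃ (n : ℕ) (K : Fin n → Mat d), IsKrausRep Φ K

/-- A density matrix: positive semidefinite with unit trace. -/
def IsDensity {d : ℕ} (ρ : Mat d) : Prop := ρ.PosSemidef ∧ ρ.trace = 1

/-- Ergodicity: the channel has a unique fixed point density matrix. -/
def IsErgodic {d : ℕ} (Φ : Mat d →ₗ[ℂ] Mat d) : Prop :=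
  ∃! ρ : Mat d, IsDensity ρ ∧ Φ ρ = ρ

/-- The support of an operator, viewed as a subspace of `ℂ^d`. -/
def supp {d : ℕ} (ρ : Mat d) : Submodule ℂ (Fin d → ℂ) := LinearMap.range ρ.mulVecLin

/-- The trace norm `‖A‖₁ = Tr √(A†A)`. -/
def traceNorm {d : ℕ} (A : Mat d) : ℝ :=
  (((Matrix.posSemidef_conjTranspose_mul_self A).1.eigenvectorUnitary.1 *
    diagonal (((↑) : ℝ → ℂ) ∘ (Real.sqrt ·) ∘ (Matrix.posSemidef_conjTranspose_mul_self A).1.eigenvalues) *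
    (star (Matrix.posSemidef_conjTranspose_mul_self A).1.eigenvectorUnitary : Mat d)).trace).re

/-- Mixing: iterates of the channel converge in trace norm to a unique state. -/
def IsMixing {d : ℕ} (Φ : Mat d →ₗ[ℂ] Mat d) : Prop :=
  ∃ ρs : Mat d, IsDensity ρs ∧ ∀ ρ : Mat d, IsDensity ρ →
    Filter.Tendsto (fun k : ℕ => traceNorm ((Φ ^ k) ρ - ρs)) Filter.atTop (nhds 0)

/-- A subspace `S` is invariant for a channel if every Kraus operator (of any Kraus
representation) maps `S` into itself. -/
def IsInvariantSubspace {d : ℕ} (Φ : Mat d →ₗ[ℂ] Mat d) (S : Submodule ℂ (Fin d → ℂ)) : Prop :=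
  ∀ (n : ℕ) (K : Fin n → Mat d), IsKrausRep Φ K → ∀ i, ∀ x ∈ S, (K i).mulVec x ∈ S

section Helpers

lemma trace_ctms {d : ℕ} (X : Mat d) :
    (Xᴴ * X).trace = ((∑ a, ∑ b, Complex.normSq (X a b) : ℝ) : ℂ) := by
  push_cast
  rw [Matrix.trace]
  simp only [Matrix.diag_apply, Matrix.mul_apply, Matrix.conjTranspose_apply]
  rw [Finset.sum_comm]
  congr 1; funext a; congr 1; funext b
  rw [mul_comm, Complex.star_def, Complex.mul_conj]

lemma eq_zero_of_trace_ctms {d : ℕ} (X : Mat d) (h : (Xᴴ * X).trace = 0) : X = 0 := by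
  rw [trace_ctms, Complex.ofReal_eq_zero] at h
  ext a b
  have h1 := (Finset.sum_eq_zero_iff_of_nonneg (fun i _ => Finset.sum_nonneg
    (fun j _ => Complex.normSq_nonneg _))).mp h a (Finset.mem_univ a)
  have h2 := (Finset.sum_eq_zero_iff_of_nonneg (fun j _ => Complex.normSq_nonneg _)).mp h1 b
    (Finset.mem_univ b)
  simpa using Complex.normSq_eq_zero.mp h2

lemma unit_mul_conj (ω : ℂ) (hω : ‖ω‖ = 1) : ω * star ω = 1 := by
  rw [Complex.star_def, Complex.mul_conj]; norm_cast
  rw [Complex.normSq_eq_norm_sq, hω, one_pow]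

lemma kraus_commute {d n : ℕ} (K : Fin n → Mat d) (hK1 : ∑ i, (K i)ᴴ * K i = 1)
    (hK2 : ∑ i, K i * (K i)ᴴ = 1) (A : Mat d) (ω : ℂ) (hω : ‖ω‖ = 1)
    (h : ∑ i, K i * A * (K i)ᴴ = ω • A) : ∀ i, K i * A = ω • (A * K i) := by
  have hωω : ω * star ω = 1 := unit_mul_conj ω hω
  have hωω' : star ω * ω = 1 := by rw [mul_comm]; exact hωω
  set X : Fin n → Mat d := fun i => K i * A - ω • (A * K i) with hX
  have hconjh : ∑ i, K i * Aᴴ * (K i)ᴴ = star ω • Aᴴ := by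
    have := congrArg conjTranspose h
    simpa [Matrix.conjTranspose_sum, Matrix.conjTranspose_mul, mul_assoc] using this
  have expand : ∀ i, X i * (X i)ᴴ =
      K i * (A * Aᴴ) * (K i)ᴴ - star ω • (K i * A * (K i)ᴴ * Aᴴ)
        - ω • (A * (K i * Aᴴ * (K i)ᴴ)) + A * (K i * (K i)ᴴ) * Aᴴ := by
    intro i
    simp only [hX, Matrix.conjTranspose_sub, Matrix.conjTranspose_smul, Matrix.conjTranspose_mul,
      sub_mul, mul_sub, smul_sub, smul_mul_assoc, mul_smul_comm, smul_smul, hωω, hωω',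
      one_smul, mul_assoc]
    abel
  have hsum : ∑ i, X i * (X i)ᴴ = (∑ i, K i * (A * Aᴴ) * (K i)ᴴ) - A * Aᴴ := by
    rw [Finset.sum_congr rfl (fun i _ => expand i)]
    rw [Finset.sum_add_distrib, Finset.sum_sub_distrib, Finset.sum_sub_distrib,
      ← Finset.smul_sum, ← Finset.smul_sum]
    have e2 : star ω • ∑ i, K i * A * (K i)ᴴ * Aᴴ = A * Aᴴ := by
      rw [← Finset.sum_mul, h, Matrix.smul_mul, smul_smul, hωω', one_smul]
    have e3 : ω • ∑ i, A * (K i * Aᴴ * (K i)ᴴ) = A * Aᴴ := by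
      rw [← Finset.mul_sum, hconjh, Matrix.mul_smul, smul_smul, hωω, one_smul]
    have e4 : ∑ i, A * (K i * (K i)ᴴ) * Aᴴ = A * Aᴴ := by
      have : ∑ i, A * (K i * (K i)ᴴ) * Aᴴ = A * (∑ i, K i * (K i)ᴴ) * Aᴴ := by
        rw [Finset.mul_sum, Finset.sum_mul]
      rw [this, hK2, mul_one]
    rw [e2, e3, e4]
    abel
  have htr : (∑ i, X i * (X i)ᴴ).trace = 0 := by
    rw [hsum, Matrix.trace_sub, Matrix.trace_sum]
    have : ∀ i, (K i * (A * Aᴴ) * (K i)ᴴ).trace = ((K i)ᴴ * K i * (A * Aᴴ)).trace := by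
      intro i; rw [Matrix.trace_mul_cycle]
    rw [Finset.sum_congr rfl (fun i _ => this i)]
    rw [← Matrix.trace_sum, ← Finset.sum_mul, hK1, one_mul, sub_self]
  have hXzero : ∀ i, X i = 0 := by
    intro i
    have hpt : ∀ j, ((X j)ᴴᴴ * (X j)ᴴ).trace =
        ((∑ a, ∑ b, Complex.normSq ((X j)ᴴ a b) : ℝ) : ℂ) := fun j => trace_ctms _
    have htr' : ∑ j, ((∑ a, ∑ b, Complex.normSq ((X j)ᴴ a b) : ℝ) : ℂ) = 0 := by
      rw [← Finset.sum_congr rfl (fun j _ => hpt j)]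
      simpa [Matrix.conjTranspose_conjTranspose, Matrix.trace_sum] using htr
    have hre : ∑ j, (∑ a, ∑ b, Complex.normSq ((X j)ᴴ a b) : ℝ) = 0 := by
      exact_mod_cast htr'
    have hz := (Finset.sum_eq_zero_iff_of_nonneg (fun j _ => Finset.sum_nonneg (fun a _ =>
      Finset.sum_nonneg (fun b _ => Complex.normSq_nonneg _)))).mp hre i (Finset.mem_univ i)
    have hY : ((X i)ᴴᴴ * (X i)ᴴ).trace = 0 := by
      rw [hpt i, hz, Complex.ofReal_zero]
    have := eq_zero_of_trace_ctms ((X i)ᴴ) hY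
    simpa using congrArg conjTranspose this
  intro i
  have := hXzero i
  simp only [hX] at this
  rw [sub_eq_zero] at this
  exact this

lemma adj_rep {d : ℕ} (Φ Φd : Mat d →ₗ[ℂ] Mat d)
    (hadj : ∀ A B : Mat d, (Aᴴ * Φ B).trace = ((Φd A)ᴴ * B).trace)
    {n : ℕ} (K : Fin n → Mat d) (hrep : IsKrausRep Φ K) (A : Mat d) :
    Φd A = ∑ i, (K i)ᴴ * A * K i := by
  have key : ∀ B, ((Φd A - ∑ i, (K i)ᴴ * A * K i)ᴴ * B).trace = 0 := by
    intro B
    rw [Matrix.conjTranspose_sub, Matrix.sub_mul, Matrix.trace_sub]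
    have h1 : ((Φd A)ᴴ * B).trace = ((∑ i, (K i)ᴴ * A * K i)ᴴ * B).trace := by
      rw [← hadj A B, hrep.1 B, Finset.mul_sum, Matrix.trace_sum,
        Matrix.conjTranspose_sum, Finset.sum_mul, Matrix.trace_sum]
      refine Finset.sum_congr rfl (fun i _ => ?_)
      rw [show ((K i)ᴴ * A * K i)ᴴ = (K i)ᴴ * Aᴴ * K i by
        simp [Matrix.conjTranspose_mul, mul_assoc]]
      rw [show Aᴴ * (K i * B * (K i)ᴴ) = (Aᴴ * K i * B) * (K i)ᴴ by
        simp [mul_assoc]]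
      rw [Matrix.trace_mul_comm]
      simp [mul_assoc]
    rw [h1, sub_self]
  have h2 := key (Φd A - ∑ i, (K i)ᴴ * A * K i)
  have := eq_zero_of_trace_ctms _ h2
  rwa [sub_eq_zero] at this

end Helpers

section Spectral

variable {d : ℕ} {H : Mat d} (hH : H.IsHermitian)

def specProj (t : ℝ) : Mat d :=
  (hH.eigenvectorUnitary : Mat d) *
    diagonal (fun k => if hH.eigenvalues k = t then (1:ℂ) else 0) *
    star (hH.eigenvectorUnitary : Mat d)

lemma sU_mul_U : star (hH.eigenvectorUnitary : Mat d) * (hH.eigenvectorUnitary : Mat d) = 1 :=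
  Unitary.coe_star_mul_self _

lemma U_mul_sU : (hH.eigenvectorUnitary : Mat d) * star (hH.eigenvectorUnitary : Mat d) = 1 :=
  Unitary.coe_mul_star_self _

lemma conj_mul_conj (D E : Fin d → ℂ) :
    ((hH.eigenvectorUnitary : Mat d) * diagonal D * star (hH.eigenvectorUnitary : Mat d)) *
      ((hH.eigenvectorUnitary : Mat d) * diagonal E * star (hH.eigenvectorUnitary : Mat d)) =
    (hH.eigenvectorUnitary : Mat d) * diagonal (D * E) * star (hH.eigenvectorUnitary : Mat d) := by
  simp only [mul_assoc]
  rw [← mul_assoc (star (hH.eigenvectorUnitary : Mat d)) (hH.eigenvectorUnitary : Mat d),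
    sU_mul_U, one_mul, ← mul_assoc (diagonal D) (diagonal E), Matrix.diagonal_mul_diagonal]
  rfl

lemma specProj_mul_specProj (s t : ℝ) :
    specProj hH s * specProj hH t = if s = t then specProj hH s else 0 := by
  unfold specProj
  rw [conj_mul_conj]
  by_cases h : s = t
  · subst h
    rw [if_pos rfl]
    have he : (fun k => if hH.eigenvalues k = s then (1:ℂ) else 0) *
        (fun k => if hH.eigenvalues k = s then (1:ℂ) else 0) =
        (fun k => if hH.eigenvalues k = s then (1:ℂ) else 0) := by
      funext k
      by_cases hk : hH.eigenvalues k = s <;> simp [Pi.mul_apply, hk]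
    rw [he]
  · rw [if_neg h]
    have he : (fun k => if hH.eigenvalues k = s then (1:ℂ) else 0) *
        (fun k => if hH.eigenvalues k = t then (1:ℂ) else 0) = 0 := by
      funext k
      by_cases hk : hH.eigenvalues k = s
      · have : ¬ hH.eigenvalues k = t := by rw [hk]; exact h
        simp [Pi.mul_apply, hk, this, h]
      · simp [Pi.mul_apply, hk]
    rw [he, show (diagonal (0 : Fin d → ℂ)) = 0 from by rw [← Matrix.diagonal_zero]; rfl,
      Matrix.mul_zero, Matrix.zero_mul]

lemma specProj_conjTranspose (t : ℝ) : (specProj hH t)ᴴ = specProj hH t := by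
  have hstar : star (fun k => if hH.eigenvalues k = t then (1:ℂ) else 0) =
      (fun k => if hH.eigenvalues k = t then (1:ℂ) else 0) := by
    funext k; by_cases hk : hH.eigenvalues k = t <;> simp [hk]
  simp [specProj, Matrix.conjTranspose_mul, Matrix.diagonal_conjTranspose, hstar,
    Matrix.star_eq_conjTranspose, mul_assoc]

lemma mul_specProj (t : ℝ) : H * specProj hH t = (t : ℂ) • specProj hH t := by
  rw [show H * specProj hH t =
      ((hH.eigenvectorUnitary : Mat d) * diagonal (RCLike.ofReal ∘ hH.eigenvalues) *
        star (hH.eigenvectorUnitary : Mat d)) * specProj hH t from by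
    have hst := hH.spectral_theorem; rw [Unitary.conjStarAlgAut_apply] at hst; rw [← hst]]
  unfold specProj
  rw [conj_mul_conj]
  have he : (RCLike.ofReal ∘ hH.eigenvalues : Fin d → ℂ) *
      (fun k => if hH.eigenvalues k = t then (1:ℂ) else 0) =
      (t : ℂ) • (fun k => if hH.eigenvalues k = t then (1:ℂ) else 0) := by
    funext k
    by_cases hk : hH.eigenvalues k = t
    · simp [hk]
    · simp [hk]
  rw [he, Matrix.diagonal_smul, Matrix.mul_smul, Matrix.smul_mul]

lemma specProj_mul (t : ℝ) : specProj hH t * H = (t : ℂ) • specProj hH t := by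
  have h1 := congrArg conjTranspose (mul_specProj hH t)
  rw [Matrix.conjTranspose_mul, specProj_conjTranspose, hH.eq,
    Matrix.conjTranspose_smul, specProj_conjTranspose] at h1
  simpa using h1

lemma sum_specProj : ∑ t ∈ Finset.image hH.eigenvalues Finset.univ, specProj hH t = 1 := by
  unfold specProj
  rw [← Finset.sum_mul, ← Finset.mul_sum]
  have hd : ∑ t ∈ Finset.image hH.eigenvalues Finset.univ,
      diagonal (fun k => if hH.eigenvalues k = t then (1:ℂ) else 0) =
      diagonal (∑ t ∈ Finset.image hH.eigenvalues Finset.univ,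
        (fun k => if hH.eigenvalues k = t then (1:ℂ) else 0)) :=
    (map_sum (Matrix.diagonalAddMonoidHom (Fin d) ℂ) _ _).symm
  rw [hd]
  have he : (∑ t ∈ Finset.image hH.eigenvalues Finset.univ,
      (fun k => if hH.eigenvalues k = t then (1:ℂ) else 0)) = (fun _ => (1:ℂ)) := by
    funext k
    rw [Finset.sum_apply]
    rw [Finset.sum_ite_eq (Finset.image hH.eigenvalues Finset.univ) (hH.eigenvalues k)
      (fun _ => (1:ℂ))]
    simp
  rw [he, Matrix.diagonal_one, mul_one, U_mul_sU]

lemma commute_specProj (M : Mat d) (hM : M * H = H * M) (t : ℝ)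
    (ht : t ∈ Finset.image hH.eigenvalues Finset.univ) :
    M * specProj hH t = specProj hH t * M := by
  have hzero : ∀ s u : ℝ, s ≠ u → specProj hH s * M * specProj hH u = 0 := by
    intro s u hsu
    have e1 : (s:ℂ) • (specProj hH s * M * specProj hH u) =
        (t:ℂ) • 0 + specProj hH s * H * M * specProj hH u := by
      rw [specProj_mul, Matrix.smul_mul, Matrix.smul_mul, smul_zero, zero_add]
    have e2 : specProj hH s * H * M * specProj hH u =
        (u:ℂ) • (specProj hH s * M * specProj hH u) := by
      rw [mul_assoc (specProj hH s) H M, ← hM, ← mul_assoc (specProj hH s) M H,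
        mul_assoc (specProj hH s * M) H (specProj hH u), mul_specProj, Matrix.mul_smul]
    have e3 : ((s:ℂ) - u) • (specProj hH s * M * specProj hH u) = 0 := by
      rw [sub_smul, e1, smul_zero, zero_add, e2, sub_self]
    have hne : ((s:ℂ) - u) ≠ 0 := sub_ne_zero.mpr (by exact_mod_cast hsu)
    exact (smul_eq_zero.mp e3).resolve_left hne
  have h1 : M * specProj hH t = specProj hH t * M * specProj hH t := by
    conv_lhs => rw [← one_mul (M * specProj hH t), ← sum_specProj hH]
    rw [Finset.sum_mul]
    rw [Finset.sum_eq_single_of_mem t ht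
      (fun s _ hst => by rw [← mul_assoc, hzero s t hst]), ← mul_assoc]
  have h2 : specProj hH t * M = specProj hH t * M * specProj hH t := by
    conv_lhs => rw [← mul_one (specProj hH t * M), ← sum_specProj hH]
    rw [Finset.mul_sum]
    rw [Finset.sum_eq_single_of_mem t ht
      (fun s _ hst => by rw [mul_assoc, ← mul_assoc, hzero t s (Ne.symm hst)])]
  rw [h1, ← h2]

end Spectral

/-- Peripheral eigenvectors of unital channels: `A` is an eigenvector of `Φ` with eigenvalue
`ω` (`|ω| = 1`) iff it is an eigenvector of the adjoint with eigenvalue `ω̄`, iff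
`Mᵢ A = ω A Mᵢ` for every Kraus representation; moreover the peripheral eigenspace is spanned
by partial isometries. -/
theorem unital_peripheral_eigenvectors {d : ℕ} (Φ Φd : Mat d →ₗ[ℂ] Mat d)
    (hΦ : IsCPTP Φ) (hunital : Φ 1 = 1) (hadj : ∀ A B : Mat d, (Aᴴ * Φ B).trace = ((Φd A)ᴴ * B).trace)
    (ω : ℂ) (hω : ‖ω‖ = 1) :
    (∀ A : Mat d, Φ A = ω • A ↔ Φd A = (starRingEnd ℂ ω) • A) ∧
    (∀ A : Mat d, Φ A = ω • A ↔
      ∀ (n : ℕ) (K : Fin n → Mat d), IsKrausRep Φ K → ∀ i, K i * A = ω • (A * K i)) ∧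
    (∀ A : Mat d, Φ A = ω • A →
      A ∈ Submodule.span ℂ {T : Mat d | T * Tᴴ * T = T ∧ Φ T = ω • T}) := by
  obtain ⟨n, K, hrep⟩ := hΦ
  have hKeq := hrep.1
  have hK1 := hrep.2
  have hsre : (starRingEnd ℂ) ω = star ω := rfl
  have hωω : ω * star ω = 1 := unit_mul_conj ω hω
  have hωω' : star ω * ω = 1 := by rw [mul_comm]; exact hωω
  have hωbar : ‖star ω‖ = 1 := by rw [norm_star]; exact hω
  have hK2' : ∀ (m : ℕ) (L : Fin m → Mat d), IsKrausRep Φ L → ∑ i, L i * (L i)ᴴ = 1 := by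
    intro m L hL
    have h := hL.1 1
    rw [hunital] at h
    simp only [mul_one] at h
    exact h.symm
  have hK2 : ∑ i, K i * (K i)ᴴ = 1 := hK2' n K hrep
  -- Part 2 forward
  have P2f : ∀ A : Mat d, Φ A = ω • A →
      ∀ (m : ℕ) (L : Fin m → Mat d), IsKrausRep Φ L → ∀ i, L i * A = ω • (A * L i) := by
    intro A hA m L hL
    exact kraus_commute L hL.2 (hK2' m L hL) A ω hω (by rw [← hL.1 A, hA])
  -- Part 2 reverse (using the witness representation)
  have P2r : ∀ A : Mat d, (∀ i, K i * A = ω • (A * K i)) → Φ A = ω • A := by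
    intro A hc
    rw [hKeq A]
    calc ∑ i, K i * A * (K i)ᴴ = ∑ i, ω • (A * (K i * (K i)ᴴ)) := by
          refine Finset.sum_congr rfl fun i _ => ?_
          rw [hc i, Matrix.smul_mul, mul_assoc]
      _ = ω • (A * ∑ i, K i * (K i)ᴴ) := by rw [← Finset.smul_sum, ← Finset.mul_sum]
      _ = ω • A := by rw [hK2, mul_one]
  have hΦdrep : ∀ A, Φd A = ∑ i, (K i)ᴴ * A * K i := adj_rep Φ Φd hadj K hrep
  -- Part 1 forward
  have P1f : ∀ A : Mat d, Φ A = ω • A → Φd A = star ω • A := by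
    intro A hA
    have hc := P2f A hA n K hrep
    have hs : A = ω • ∑ i, (K i)ᴴ * A * K i := by
      calc A = 1 * A := (one_mul A).symm
        _ = (∑ i, (K i)ᴴ * K i) * A := by rw [hK1]
        _ = ∑ i, (K i)ᴴ * (K i * A) := by
            rw [Finset.sum_mul]
            exact Finset.sum_congr rfl fun i _ => mul_assoc _ _ _
        _ = ∑ i, ω • ((K i)ᴴ * A * K i) := by
            refine Finset.sum_congr rfl fun i _ => ?_
            rw [hc i, Matrix.mul_smul, mul_assoc]
        _ = ω • ∑ i, (K i)ᴴ * A * K i := (Finset.smul_sum).symm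
    rw [hΦdrep A]
    have h2 := congrArg (fun X : Mat d => star ω • X) hs
    simp only [smul_smul, hωω'] at h2
    rw [one_smul] at h2
    exact h2.symm
  -- Part 1 reverse
  have P1r : ∀ A : Mat d, Φd A = star ω • A → Φ A = ω • A := by
    intro A hA
    have hK1' : ∑ i, ((fun i => (K i)ᴴ) i)ᴴ * (fun i => (K i)ᴴ) i = 1 := by
      simpa [Matrix.conjTranspose_conjTranspose] using hK2
    have hK2'' : ∑ i, (fun i => (K i)ᴴ) i * ((fun i => (K i)ᴴ) i)ᴴ = 1 := by
      simpa [Matrix.conjTranspose_conjTranspose] using hK1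
    have hd : ∑ i, (fun i => (K i)ᴴ) i * A * ((fun i => (K i)ᴴ) i)ᴴ = star ω • A := by
      simp only [Matrix.conjTranspose_conjTranspose]
      rw [← hΦdrep A]
      exact hA
    have hc := kraus_commute (fun i => (K i)ᴴ) hK1' hK2'' A (star ω) hωbar hd
    have hs : A = star ω • ∑ i, K i * A * (K i)ᴴ := by
      calc A = 1 * A := (one_mul A).symm
        _ = (∑ i, K i * (K i)ᴴ) * A := by rw [hK2]
        _ = ∑ i, K i * ((K i)ᴴ * A) := by
            rw [Finset.sum_mul]
            exact Finset.sum_congr rfl fun i _ => mul_assoc _ _ _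
        _ = ∑ i, star ω • (K i * A * (K i)ᴴ) := by
            refine Finset.sum_congr rfl fun i _ => ?_
            rw [hc i, Matrix.mul_smul, mul_assoc]
        _ = star ω • ∑ i, K i * A * (K i)ᴴ := (Finset.smul_sum).symm
    rw [hKeq A]
    have h2 := congrArg (fun X : Mat d => ω • X) hs
    simp only [smul_smul, hωω] at h2
    rw [one_smul] at h2
    exact h2.symm
  refine ⟨fun A => ⟨fun h => by rw [hsre]; exact P1f A h, fun h => P1r A (by rw [← hsre]; exact h)⟩,
    fun A => ⟨fun h => P2f A h, fun h => P2r A (h n K hrep)⟩, ?_⟩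
  -- Part 3
  intro A hA
  have hc := P2f A hA n K hrep
  have hΦdA := P1f A hA
  have hcadj : ∀ i, (K i)ᴴ * A = star ω • (A * (K i)ᴴ) := by
    have hK1' : ∑ i, ((fun i => (K i)ᴴ) i)ᴴ * (fun i => (K i)ᴴ) i = 1 := by
      simpa [Matrix.conjTranspose_conjTranspose] using hK2
    have hK2'' : ∑ i, (fun i => (K i)ᴴ) i * ((fun i => (K i)ᴴ) i)ᴴ = 1 := by
      simpa [Matrix.conjTranspose_conjTranspose] using hK1
    have hd : ∑ i, (fun i => (K i)ᴴ) i * A * ((fun i => (K i)ᴴ) i)ᴴ = star ω • A := by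
      simp only [Matrix.conjTranspose_conjTranspose]
      rw [← hΦdrep A]
      exact hΦdA
    exact kraus_commute (fun i => (K i)ᴴ) hK1' hK2'' A (star ω) hωbar hd
  have hcH : ∀ i, K i * Aᴴ = star ω • (Aᴴ * K i) := by
    intro i
    have h1 := congrArg conjTranspose (hcadj i)
    rw [Matrix.conjTranspose_mul, Matrix.conjTranspose_conjTranspose,
      Matrix.conjTranspose_smul, Matrix.conjTranspose_mul,
      Matrix.conjTranspose_conjTranspose, star_star] at h1
    rw [h1, smul_smul, hωω', one_smul]
  have hPSD := Matrix.posSemidef_conjTranspose_mul_self A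
  have hH : (Aᴴ * A).IsHermitian := hPSD.1
  have hfix : ∑ i, K i * (Aᴴ * A) * (K i)ᴴ = Aᴴ * A := by
    have hterm : ∀ i, K i * (Aᴴ * A) * (K i)ᴴ = Aᴴ * A * (K i * (K i)ᴴ) := by
      intro i
      calc K i * (Aᴴ * A) * (K i)ᴴ = (K i * Aᴴ) * (A * (K i)ᴴ) := by
            simp only [mul_assoc]
        _ = (star ω • (Aᴴ * K i)) * (A * (K i)ᴴ) := by rw [hcH i]
        _ = star ω • (Aᴴ * ((K i * A) * (K i)ᴴ)) := by
            rw [Matrix.smul_mul]; congr 1; simp only [mul_assoc]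
        _ = star ω • (Aᴴ * ((ω • (A * K i)) * (K i)ᴴ)) := by rw [hc i]
        _ = (star ω * ω) • (Aᴴ * (A * K i * (K i)ᴴ)) := by
            rw [Matrix.smul_mul, Matrix.mul_smul, smul_smul]
        _ = Aᴴ * A * (K i * (K i)ᴴ) := by
            rw [hωω', one_smul]; simp only [mul_assoc]
    rw [Finset.sum_congr rfl (fun i _ => hterm i), ← Finset.mul_sum, hK2, mul_one]
  have hKH : ∀ i, K i * (Aᴴ * A) = (Aᴴ * A) * K i := by
    have h1 : ∑ i, K i * (Aᴴ * A) * (K i)ᴴ = (1:ℂ) • (Aᴴ * A) := by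
      rw [one_smul]; exact hfix
    have h2 := kraus_commute K hK1 hK2 (Aᴴ * A) 1 (by simp) h1
    intro i
    have h := h2 i
    rwa [one_smul] at h
  have hrw : A = ∑ t ∈ Finset.image hH.eigenvalues Finset.univ, A * specProj hH t := by
    rw [← Finset.mul_sum, sum_specProj, mul_one]
  rw [hrw]
  refine Submodule.sum_mem _ fun t ht => ?_
  by_cases h0 : t = 0
  · subst h0
    have hz : A * specProj hH 0 = 0 := by
      apply Matrix.conjTranspose_mul_self_eq_zero.mp
      rw [Matrix.conjTranspose_mul, specProj_conjTranspose]
      calc specProj hH 0 * Aᴴ * (A * specProj hH 0)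
          = (specProj hH 0 * (Aᴴ * A)) * specProj hH 0 := by simp only [mul_assoc]
        _ = 0 := by
            rw [specProj_mul, Complex.ofReal_zero, zero_smul, Matrix.zero_mul]
    rw [hz]
    exact Submodule.zero_mem _
  · obtain ⟨k, _, hk⟩ := Finset.mem_image.mp ht
    have htnn : 0 ≤ t := hk ▸ hPSD.eigenvalues_nonneg k
    have htpos : 0 < t := lt_of_le_of_ne htnn (Ne.symm h0)
    have hsq : Real.sqrt t * Real.sqrt t = t := Real.mul_self_sqrt htnn
    have hsqpos : 0 < Real.sqrt t := Real.sqrt_pos.mpr htpos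
    have hQQ : specProj hH t * specProj hH t = specProj hH t := by
      rw [specProj_mul_specProj, if_pos rfl]
    have hAQ : A * specProj hH t =
        ((Real.sqrt t : ℝ) : ℂ) • ((((Real.sqrt t)⁻¹ : ℝ) : ℂ) • (A * specProj hH t)) := by
      rw [smul_smul, ← Complex.ofReal_mul, mul_inv_cancel₀ hsqpos.ne',
        Complex.ofReal_one, one_smul]
    rw [hAQ]
    refine Submodule.smul_mem _ _ (Submodule.subset_span ?_)
    set c : ℝ := (Real.sqrt t)⁻¹ with hcdef
    have hQHQ : specProj hH t * (Aᴴ * (A * specProj hH t)) = (t:ℂ) • specProj hH t := by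
      have e : specProj hH t * (Aᴴ * (A * specProj hH t)) =
          (specProj hH t * (Aᴴ * A)) * specProj hH t := by simp only [mul_assoc]
      rw [e, specProj_mul, Matrix.smul_mul, hQQ]
    have hmat : A * specProj hH t * (specProj hH t * Aᴴ) * (A * specProj hH t) =
        (t:ℂ) • (A * specProj hH t) := by
      calc A * specProj hH t * (specProj hH t * Aᴴ) * (A * specProj hH t)
          = A * (specProj hH t * (specProj hH t * (Aᴴ * (A * specProj hH t)))) := by
            simp only [mul_assoc]
        _ = A * (specProj hH t * ((t:ℂ) • specProj hH t)) := by rw [hQHQ]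
        _ = (t:ℂ) • (A * specProj hH t) := by
            rw [Matrix.mul_smul, hQQ, Matrix.mul_smul]
    have hstarc : star ((c:ℝ):ℂ) = ((c:ℝ):ℂ) := Complex.conj_ofReal c
    have hscalar : ((c:ℝ):ℂ) * (((c:ℝ):ℂ) * ((c:ℝ):ℂ)) * (t:ℂ) = ((c:ℝ):ℂ) := by
      rw [← Complex.ofReal_mul, ← Complex.ofReal_mul, ← Complex.ofReal_mul]
      congr 1
      rw [hcdef]
      field_simp
      nlinarith [hsq, hsqpos]
    constructor
    · show ((c:ℝ):ℂ) • (A * specProj hH t) * (((c:ℝ):ℂ) • (A * specProj hH t))ᴴ *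
          (((c:ℝ):ℂ) • (A * specProj hH t)) = ((c:ℝ):ℂ) • (A * specProj hH t)
      rw [Matrix.conjTranspose_smul, Matrix.conjTranspose_mul, specProj_conjTranspose, hstarc]
      simp only [Matrix.smul_mul, Matrix.mul_smul, smul_smul]
      rw [hmat, smul_smul, hscalar]
    · show Φ (((c:ℝ):ℂ) • (A * specProj hH t)) = ω • (((c:ℝ):ℂ) • (A * specProj hH t))
      have hQK : ∀ i, K i * specProj hH t = specProj hH t * K i :=
        fun i => commute_specProj hH (K i) (hKH i) t ht
      rw [_root_.map_smul, hKeq (A * specProj hH t)]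
      have hterm : ∀ i, K i * (A * specProj hH t) * (K i)ᴴ =
          ω • (A * specProj hH t * (K i * (K i)ᴴ)) := by
        intro i
        calc K i * (A * specProj hH t) * (K i)ᴴ
            = (K i * A) * specProj hH t * (K i)ᴴ := by simp only [mul_assoc]
          _ = ω • (A * K i * specProj hH t * (K i)ᴴ) := by
              rw [hc i, Matrix.smul_mul, Matrix.smul_mul]
          _ = ω • (A * (specProj hH t * K i) * (K i)ᴴ) := by
              rw [mul_assoc A (K i), hQK i]
          _ = ω • (A * specProj hH t * (K i * (K i)ᴴ)) := by
              simp only [mul_assoc]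
      rw [Finset.sum_congr rfl (fun i _ => hterm i), ← Finset.smul_sum, ← Finset.mul_sum,
        hK2, mul_one, smul_comm]
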